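/- Let E : A → P be a conditional expectation of finite index, and suppose e ∈ A is a projection with E(e) = (Index E)^{-1}. Then e e_P e = (Index E)^{-1} e in the basic construction, where e_P is the Jones projection of E. -/
import Mathlib


/-- A finite-index inclusion `P ⊆ A` of unital C*-algebras together with its
C*-basic construction, all realized inside one ambient C*-algebra `B = C*⟨A, e_P⟩`:
`E : A → P` is a conditional expectation of finite Watatani index `ind`
(a central, positive, invertible element, with inverse `indInv`), `eP` is the Jones
projection (`e_P a e_P = E(a) e_P`, `B` is the linear span of `A e_P A`), and
`Ehat` is the (faithful) dual conditional expectation `Ê : B → A`,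
`Ê(x e_P y) = (Index E)⁻¹ x y`. -/
structure WatataniSetup (B : Type*) [NormedRing B] [StarRing B] [CStarRing B]
    [NormedAlgebra ℂ B] [CompleteSpace B] [StarModule ℂ B] [PartialOrder B]
    [StarOrderedRing B] where
  A : StarSubalgebra ℂ B
  P : StarSubalgebra ℂ B
  le : P ≤ A
  E : B → B
  eP : B
  Ehat : B → B
  ind : B
  indInv : B
  ind_mem : ind ∈ P
  ind_central : ∀ b : B, Commute ind b
  ind_pos : 0 ≤ ind
  ind_mul_inv : ind * indInv = 1
  inv_mul_ind : indInv * ind = 1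
  -- `E` is a conditional expectation from `A` onto `P`
  E_add : ∀ x y : B, E (x + y) = E x + E y
  E_smul : ∀ (c : ℂ) (x : B), E (c • x) = c • E x
  E_mem : ∀ x ∈ A, E x ∈ P
  E_fix : ∀ x ∈ P, E x = x
  E_bimod : ∀ p ∈ P, ∀ q ∈ P, ∀ x : B, E (p * x * q) = p * E x * q
  E_star : ∀ x : B, E (star x) = star (E x)
  E_pos : ∀ x : B, 0 ≤ E (star x * x)
  E_faithful : ∀ x ∈ A, E (star x * x) = 0 → x = 0
  -- the Jones projection
  eP_idem : eP * eP = eP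
  eP_star : star eP = eP
  eP_conj : ∀ a ∈ A, eP * a * eP = E a * eP
  eP_comm : ∀ p ∈ P, Commute eP p
  eP_inj : ∀ p ∈ P, p * eP = 0 → p = 0
  -- `B` is the basic construction: the linear span of `A e_P A`
  span : ∀ z : B, ∃ (n : ℕ) (x y : Fin n → B),
    (∀ i, x i ∈ A) ∧ (∀ i, y i ∈ A) ∧ z = ∑ i, x i * eP * y i
  -- the dual conditional expectation `Ê : B → A`
  Ehat_add : ∀ x y : B, Ehat (x + y) = Ehat x + Ehat y
  Ehat_smul : ∀ (c : ℂ) (x : B), Ehat (c • x) = c • Ehat x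
  Ehat_mem : ∀ x : B, Ehat x ∈ A
  Ehat_fix : ∀ x ∈ A, Ehat x = x
  Ehat_bimod : ∀ p ∈ A, ∀ q ∈ A, ∀ x : B, Ehat (p * x * q) = p * Ehat x * q
  Ehat_star : ∀ x : B, Ehat (star x) = star (Ehat x)
  Ehat_pos : ∀ x : B, 0 ≤ Ehat (star x * x)
  Ehat_faithful : ∀ x : B, Ehat (star x * x) = 0 → x = 0
  Ehat_eP : ∀ x ∈ A, ∀ y ∈ A, Ehat (x * eP * y) = indInv * (x * y)


/-- if `e ∈ A` is a projection with `E(e) = (Index E)⁻¹`, then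
`e e_P e = (Index E)⁻¹ e` in the basic construction. -/
theorem proj_jones_proj_conj {B : Type*} [NormedRing B] [StarRing B] [CStarRing B]
    [NormedAlgebra ℂ B] [CompleteSpace B] [StarModule ℂ B] [PartialOrder B]
    [StarOrderedRing B] (S : WatataniSetup B)
    (e : B) (he : e ∈ S.A) (he_idem : e * e = e) (he_star : star e = e)
    (hEe : S.E e = S.indInv) :
    e * S.eP * e = S.indInv * e := by
  set I := S.indInv with hI
  -- indInv commutes with everything
  have cI : ∀ b : B, I * b = b * I := by
    intro b
    have h1 : I * b = I * b * (S.ind * I) := by rw [S.ind_mul_inv, mul_one]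
    calc I * b = I * b * (S.ind * I) := h1
      _ = I * (b * S.ind) * I := by noncomm_ring
      _ = I * (S.ind * b) * I := by rw [(S.ind_central b).eq]
      _ = (I * S.ind) * (b * I) := by noncomm_ring
      _ = b * I := by rw [S.inv_mul_ind, one_mul]
  -- star of indInv
  have hIstar : star I = I := by
    have hind : star S.ind = S.ind := (IsSelfAdjoint.of_nonneg S.ind_pos)
    have h2 : S.ind * star I = 1 := by
      have := congrArg star S.inv_mul_ind
      simpa [star_mul, hind] using this
    calc star I = (I * S.ind) * star I := by rw [S.inv_mul_ind, one_mul]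
      _ = I * (S.ind * star I) := by noncomm_ring
      _ = I := by rw [h2, mul_one]
  have h1A : (1 : B) ∈ S.A := S.A.one_mem
  have hIA : I ∈ S.A := by
    have := S.Ehat_mem S.eP
    have heq : S.Ehat S.eP = I := by
      have := S.Ehat_eP 1 h1A 1 h1A
      simpa using this
    rwa [heq] at this
  -- key conjugation identity
  have hkey : S.eP * e * S.eP = I * S.eP := by
    rw [S.eP_conj e he, hEe]
  set f := e * S.eP * e with hf
  have hff : f * f = I * f := by
    calc f * f = e * (S.eP * (e * e) * S.eP) * e := by rw [hf]; noncomm_ring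
      _ = e * (S.eP * e * S.eP) * e := by rw [he_idem]
      _ = e * (I * S.eP) * e := by rw [hkey]
      _ = (e * I) * S.eP * e := by noncomm_ring
      _ = I * e * S.eP * e := by rw [← cI e]
      _ = I * f := by rw [hf]; noncomm_ring
  have hfe : f * e = f := by rw [hf, mul_assoc, he_idem]
  have hef : e * f = f := by
    rw [hf, ← mul_assoc, ← mul_assoc, he_idem]
  have hEhatf : S.Ehat f = I * e := by
    have := S.Ehat_eP e he e he
    rw [hf, this, he_idem]
  set x := f - I * e with hx
  have hxstar : star x = x := by
    rw [hx, star_sub, hf, star_mul, star_mul, he_star, S.eP_star,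
      star_mul, he_star, hIstar, ← cI e, ← mul_assoc]
  have hEx : S.Ehat x = 0 := by
    have h1 : S.Ehat (I * e) = I * e := S.Ehat_fix _ (S.A.mul_mem hIA he)
    have hadd : S.Ehat (f + -(I * e)) = S.Ehat f + S.Ehat (-(I * e)) :=
      S.Ehat_add _ _
    have hneg : S.Ehat (-(I * e)) = -(S.Ehat (I * e)) := by
      have := S.Ehat_smul (-1 : ℂ) (I * e)
      simpa using this
    rw [hx, sub_eq_add_neg, hadd, hneg, h1, hEhatf, add_neg_cancel]
  have hxx : x * x = -(I * x) := by
    have : x * x = f * f - f * (I * e) - I * e * f + (I * e) * (I * e) := by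
      rw [hx]; noncomm_ring
    rw [this, hff]
    have e1 : f * (I * e) = I * f := by
      rw [← mul_assoc, ← cI f, mul_assoc, hfe]
    have e2 : I * e * f = I * f := by rw [mul_assoc, hef]
    have e3 : (I * e) * (I * e) = I * (I * e) := by
      rw [mul_assoc, ← mul_assoc e I e, ← cI e, mul_assoc, he_idem, ← mul_assoc]
    rw [e1, e2, e3, hx]; noncomm_ring
  have hx0 : x = 0 := by
    apply S.Ehat_faithful
    rw [hxstar, hxx]
    have hbim : S.Ehat (I * x * 1) = I * S.Ehat x * 1 := S.Ehat_bimod I hIA 1 h1A x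
    have hneg : S.Ehat (-(I * x)) = -(S.Ehat (I * x)) := by
      have := S.Ehat_smul (-1 : ℂ) (I * x)
      simpa using this
    rw [hneg]
    simp only [mul_one] at hbim
    rw [hbim, hEx, mul_zero, neg_zero]
  have := sub_eq_zero.mp hx0
  rw [hf] at this
  exact this
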